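/- Let (X, d_X) and (Y, d_Y) be compact ultrametric spaces with Sp(X) = Sp(Y). Then every weak similarity Φ : X → Y is an isometry, where a weak similarity is a bijection Φ : X → Y for which there exists a strictly increasing bijection f : Sp(Y) → Sp(X) with d_X(x,y) = f(d_Y(Φ(x), Φ(y))) for all x, y ∈ X. (It suffices to prove this for finite ultrametric spaces.) -/

import Mathlib

lemma strictMonoOn_bijOn_fixed (s : Finset ℝ) (f : ℝ → ℝ)
    (hb : Set.BijOn f ↑s ↑s) (hm : StrictMonoOn f ↑s) :
    ∀ a ∈ s, f a = a := by
  let g : s → s := fun a => ⟨f a, hb.mapsTo a.2⟩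
  have hg : StrictMono g := fun a b h => hm a.2 b.2 h
  have hsurj : Function.Surjective g := by
    intro b
    obtain ⟨a, ha, hfa⟩ := hb.surjOn b.2
    exact ⟨⟨a, ha⟩, Subtype.ext hfa⟩
  have h1 : (StrictMono.orderIsoOfSurjective g hg hsurj : s ≃o s) = OrderIso.refl s :=
    Subsingleton.elim _ _
  intro a ha
  have := congrArg (fun e : s ≃o s => (e ⟨a, ha⟩ : ℝ)) h1
  simpa [StrictMono.coe_orderIsoOfSurjective, g] using this

/-- If two finite ultrametric spaces have the same spectrum, then every weak
similarity between them is an isometry. -/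
theorem weak_similarity_is_isometry {X Y : Type*} [Fintype X] [Fintype Y]
    (dX : X → X → ℝ) (dY : Y → Y → ℝ)
    (hXnonneg : ∀ x y, 0 ≤ dX x y)
    (hXsymm : ∀ x y, dX x y = dX y x)
    (hXzero : ∀ x y, dX x y = 0 ↔ x = y)
    (hXultra : ∀ x y z, dX x y ≤ max (dX x z) (dX z y))
    (hYnonneg : ∀ x y, 0 ≤ dY x y)
    (hYsymm : ∀ x y, dY x y = dY y x)
    (hYzero : ∀ x y, dY x y = 0 ↔ x = y)
    (hYultra : ∀ x y z, dY x y ≤ max (dY x z) (dY z y))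
    (hspec : Finset.univ.image (fun p : X × X => dX p.1 p.2) =
      Finset.univ.image (fun p : Y × Y => dY p.1 p.2))
    (Φ : X → Y) (hΦ : Function.Bijective Φ)
    (f : ℝ → ℝ)
    (hfbij : Set.BijOn f
      ↑(Finset.univ.image (fun p : Y × Y => dY p.1 p.2))
      ↑(Finset.univ.image (fun p : X × X => dX p.1 p.2)))
    (hfmono : StrictMonoOn f ↑(Finset.univ.image (fun p : Y × Y => dY p.1 p.2)))
    (heq : ∀ x y : X, dX x y = f (dY (Φ x) (Φ y))) :
    ∀ x y : X, dX x y = dY (Φ x) (Φ y) := by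
  rw [hspec] at hfbij
  intro x y
  have hmem : dY (Φ x) (Φ y) ∈ Finset.univ.image (fun p : Y × Y => dY p.1 p.2) :=
    Finset.mem_image.2 ⟨(Φ x, Φ y), Finset.mem_univ _, rfl⟩
  rw [heq x y, strictMonoOn_bijOn_fixed _ f hfbij hfmono _ hmem]
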